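/- The Tits cone of a Coxeter system, defined as the union over w ∈ W of w(C̄) where C̄ is the closed fundamental chamber, is a convex cone. -/

import Mathlib

open scoped Classical

/-- A geometric representation (with based root system) of a Coxeter system `cs`
on a real vector space `V`, preserving a symmetric bilinear form `form`, with
simple roots `root i` satisfying the standard inner products
`B(α_i, α_j) = -cos (π / m i j)` (with value `≤ -1` when `m i j = ∞`, encoded `0`). -/
structure GeomRep {B : Type*} {W : Type*} [Group W] (M : CoxeterMatrix B)
    (cs : CoxeterSystem M W) (V : Type*) [AddCommGroup V] [Module ℝ V] where
  form : LinearMap.BilinForm ℝ V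
  form_symm : ∀ u v : V, form u v = form v u
  ρ : W →* (V ≃ₗ[ℝ] V)
  ρ_faithful : Function.Injective ρ
  root : B → V
  root_indep : LinearIndependent ℝ root
  form_preserved : ∀ (w : W) (u v : V), form (ρ w u) (ρ w v) = form u v
  form_root_finite : ∀ i j : B, M i j ≠ 0 →
    form (root i) (root j) = - Real.cos (Real.pi / (M i j : ℝ))
  form_root_infinite : ∀ i j : B, M i j = 0 → form (root i) (root j) ≤ -1
  simple_act : ∀ (i : B) (v : V),
    ρ (cs.simple i) v = v - (2 * form (root i) v) • root i

namespace GeomRep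

variable {B : Type*} {W : Type*} [Group W] {M : CoxeterMatrix B}
  {cs : CoxeterSystem M W} {V : Type*} [AddCommGroup V] [Module ℝ V]
  (G : GeomRep M cs V)

/-- The root system `Φ = W · Δ`. -/
def Roots : Set V := {v | ∃ (w : W) (i : B), v = G.ρ w (G.root i)}

/-- `v` is a nonnegative linear combination of simple roots. -/
def IsNonnegComb (v : V) : Prop :=
  ∃ c : B →₀ ℝ, (∀ i, 0 ≤ c i) ∧ v = c.sum fun i a => a • G.root i

/-- The set of positive roots `Φ⁺`. -/
def PosRoots : Set V := {v ∈ G.Roots | G.IsNonnegComb v}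

/-- The set of negative roots `Φ⁻ = -Φ⁺`. -/
def NegRoots : Set V := {v ∈ G.Roots | G.IsNonnegComb (-v)}

/-- The reflection in a root `α`, as a linear endomorphism of `V`. -/
def refl (α : V) : Module.End ℝ V :=
  LinearMap.id - (2 : ℝ) • LinearMap.smulRight (G.form α) α

/-- The (left) inversion set `N(w) = Φ⁺ ∩ w(Φ⁻)`. -/
def invSet (w : W) : Set V := {β ∈ G.PosRoots | G.ρ w⁻¹ β ∈ G.NegRoots}

/-- `β` dominates `α` : every `w` sending `β` negative sends `α` negative. -/
def Dominates (β α : V) : Prop := ∀ w : W, G.ρ w β ∈ G.NegRoots → G.ρ w α ∈ G.NegRoots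

/-- A small root: a positive root dominating no positive root other than itself. -/
def IsSmall (β : V) : Prop :=
  β ∈ G.PosRoots ∧ ∀ α ∈ G.PosRoots, G.Dominates β α → α = β

/-- The conical (nonnegative) hull of a set. -/
def cone (X : Set V) : Set V :=
  {v | ∃ c : V →₀ ℝ, (∀ x, 0 ≤ c x) ∧ ↑c.support ⊆ X ∧ v = c.sum fun x a => a • x}

/-- Low element: its inversion set is the biconvex closure of its small inversions. -/
def IsLow (Sm : Set V) (w : W) : Prop :=
  G.invSet w = cone (G.invSet w ∩ Sm) ∩ G.PosRoots

/-- The closed fundamental chamber. -/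
def chamber : Set V := {v | ∀ i : B, 0 ≤ G.form v (G.root i)}

/-- The Tits cone `T = ⋃_{w ∈ W} w(C̄)`. -/
def titsCone : Set V := ⋃ w : W, ⇑(G.ρ w) '' G.chamber

end GeomRep

namespace GeomRep

variable {B : Type*} {W : Type*} [Group W] {M : CoxeterMatrix B}
  {cs : CoxeterSystem M W} {V : Type*} [AddCommGroup V] [Module ℝ V]
  (G : GeomRep M cs V)

lemma rho_one (v : V) : G.ρ 1 v = v := by rw [map_one]; rfl

lemma rho_mul (u w : W) (v : V) : G.ρ (u * w) v = G.ρ u (G.ρ w v) := by rw [map_mul]; rfl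

lemma rho_inv_cancel (w : W) (v : V) : G.ρ w⁻¹ (G.ρ w v) = v := by
  rw [← G.rho_mul, inv_mul_cancel, G.rho_one]

lemma rho_cancel_inv (w : W) (v : V) : G.ρ w (G.ρ w⁻¹ v) = v := by
  rw [← G.rho_mul, mul_inv_cancel, G.rho_one]

lemma form_rho_left (w : W) (u v : V) : G.form (G.ρ w u) v = G.form u (G.ρ w⁻¹ v) := by
  conv_lhs => rw [← G.form_preserved w⁻¹ (G.ρ w u) v, G.rho_inv_cancel]

lemma form_root_self (i : B) : G.form (G.root i) (G.root i) = 1 := by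
  have h := G.form_root_finite i i (by simp)
  rw [M.diagonal i] at h
  simpa using h

lemma simple_act_self (i : B) : G.ρ (cs.simple i) (G.root i) = - G.root i := by
  rw [G.simple_act, G.form_root_self]
  module

lemma isNonnegComb_zero : G.IsNonnegComb 0 :=
  ⟨0, fun _ => le_rfl, by simp⟩

lemma isNonnegComb_root (i : B) : G.IsNonnegComb (G.root i) := by
  refine ⟨Finsupp.single i 1, fun k => ?_, ?_⟩
  · rw [Finsupp.single_apply]; split <;> norm_num
  · rw [Finsupp.sum_single_index (by simp)]; simp

lemma IsNonnegComb.add {u v : V} (hu : G.IsNonnegComb u) (hv : G.IsNonnegComb v) :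
    G.IsNonnegComb (u + v) := by
  obtain ⟨c, hc, rfl⟩ := hu
  obtain ⟨d, hd, rfl⟩ := hv
  refine ⟨c + d, fun k => by simpa using add_nonneg (hc k) (hd k), ?_⟩
  rw [Finsupp.sum_add_index' (by simp) (fun a b₁ b₂ => add_smul b₁ b₂ _)]

lemma IsNonnegComb.smul {t : ℝ} (ht : 0 ≤ t) {v : V} (hv : G.IsNonnegComb v) :
    G.IsNonnegComb (t • v) := by
  obtain ⟨c, hc, rfl⟩ := hv
  refine ⟨t • c, fun k => by simpa using mul_nonneg ht (hc k), ?_⟩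
  rw [Finsupp.smul_sum, Finsupp.sum_smul_index' (by simp)]
  simp_rw [smul_eq_mul, mul_smul]

lemma coeff_eq_of_sum_eq {c d : B →₀ ℝ}
    (h : (c.sum fun i a => a • G.root i) = d.sum fun i a => a • G.root i) : c = d := by
  have h1 : Finsupp.linearCombination ℝ G.root (c - d) = 0 := by
    rw [map_sub, Finsupp.linearCombination_apply, Finsupp.linearCombination_apply, h, sub_self]
  have := linearIndependent_iff.mp G.root_indep _ h1
  exact sub_eq_zero.mp this

lemma eq_zero_of_isNonnegComb_of_neg {v : V} (hv : G.IsNonnegComb v)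
    (hv' : G.IsNonnegComb (-v)) : v = 0 := by
  obtain ⟨c, hc, hcv⟩ := hv
  obtain ⟨d, hd, hdv⟩ := hv'
  have hsum : ((c + d).sum fun i a => a • G.root i) = (0 : B →₀ ℝ).sum fun i a => a • G.root i := by
    rw [Finsupp.sum_add_index' (by simp) (fun a b₁ b₂ => add_smul b₁ b₂ _), ← hcv, ← hdv]
    simp
  have hcd := G.coeff_eq_of_sum_eq hsum
  have hc0 : c = 0 := by
    ext k
    have : c k + d k = 0 := by
      have := congrArg (fun f : B →₀ ℝ => f k) hcd
      simpa using this
    have := le_antisymm (by linarith [hd k]) (hc k)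
    simpa using this
  rw [hcv, hc0]
  simp

lemma form_nonneg_of_chamber {d v : V} (hd : d ∈ G.chamber) (hv : G.IsNonnegComb v) :
    0 ≤ G.form d v := by
  obtain ⟨c, hc, rfl⟩ := hv
  rw [map_finsuppSum, Finsupp.sum]
  refine Finset.sum_nonneg fun i _ => ?_
  rw [map_smul, smul_eq_mul]
  exact mul_nonneg (hc i) (hd i)

end GeomRep

section Combinatorics

open CoxeterSystem

variable {B : Type*} {W : Type*} [Group W] {M : CoxeterMatrix B} (cs : CoxeterSystem M W)

lemma mem_alternatingWord_aux {i j : B} : ∀ {m : ℕ} {x : B},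
    x ∈ alternatingWord i j m → x = i ∨ x = j := by
  intro m
  induction m with
  | zero => intro x hx; simp [alternatingWord] at hx
  | succ n ih =>
    intro x hx
    rw [alternatingWord_succ'] at hx
    rcases List.mem_cons.mp hx with h | h
    · by_cases hE : Even n <;> simp [hE] at h <;> tauto
    · exact ih h

lemma eq_alt_of_min {i j : B} (hij : i ≠ j) :
    ∀ ω : List B, (∀ x ∈ ω, x = i ∨ x = j) →
    (∀ τ : List B, (∀ x ∈ τ, x = i ∨ x = j) → cs.wordProd τ = cs.wordProd ω →
      ω.length ≤ τ.length) →
    ω = alternatingWord i j ω.length ∨ ω = alternatingWord j i ω.length := by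
  intro ω
  induction ω with
  | nil => intro _ _; left; rfl
  | cons x ω' ih =>
    intro hmem hmin
    have hx := hmem x List.mem_cons_self
    have hmem' : ∀ y ∈ ω', y = i ∨ y = j := fun y hy => hmem y (List.mem_cons_of_mem x hy)
    have hmin' : ∀ τ : List B, (∀ y ∈ τ, y = i ∨ y = j) → cs.wordProd τ = cs.wordProd ω' →
        ω'.length ≤ τ.length := by
      intro τ hτ hpr
      have hmm := hmin (x :: τ) ?_ ?_
      · simpa using hmm
      · intro y hy
        rcases List.mem_cons.mp hy with h | h
        · exact h ▸ hx
        · exact hτ y h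
      · rw [cs.wordProd_cons, cs.wordProd_cons, hpr]
    rcases List.eq_nil_or_concat ω' with rfl | _
    · rcases hx with rfl | rfl
      · right; simp [alternatingWord]
      · left; simp [alternatingWord]
    · have hpos : 0 < ω'.length := by
        rcases ω' with _ | ⟨y, l⟩
        · simp_all
        · simp
      obtain ⟨q', hq⟩ : ∃ q', ω'.length = q' + 1 := ⟨ω'.length - 1, by omega⟩
      rcases ih hmem' hmin' with h' | h'
      · -- ω' = alternatingWord i j (q' + 1)
        have hω' : ω' = alternatingWord i j (q' + 1) := hq ▸ h'
        have hhead : alternatingWord i j (q' + 1)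
            = (if Even q' then j else i) :: alternatingWord i j q' :=
          alternatingWord_succ' i j q'
        by_cases hxy : x = (if Even q' then j else i)
        · exfalso
          have hτ : cs.wordProd (alternatingWord i j q') = cs.wordProd (x :: ω') := by
            rw [cs.wordProd_cons, hω', hhead, cs.wordProd_cons, hxy,
              ← mul_assoc, cs.simple_mul_simple_self, one_mul]
          have := hmin _ (fun y hy => mem_alternatingWord_aux hy) hτ
          rw [length_alternatingWord] at this
          simp [hq] at this
        · left
          have hxval : x = (if Even q' then i else j) := by
            rcases hx with rfl | rfl <;> by_cases hE : Even q' <;> simp [hE] at hxy ⊢ <;> tauto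
          have hlen : (x :: ω').length = (q' + 1) + 1 := by simp [hq]
          rw [hlen, alternatingWord_succ', hω']
          congr 1
          rw [hxval]
          by_cases hE : Even q' <;> simp [Nat.even_add_one, hE]
      · -- ω' = alternatingWord j i (q' + 1)
        have hω' : ω' = alternatingWord j i (q' + 1) := hq ▸ h'
        have hhead : alternatingWord j i (q' + 1)
            = (if Even q' then i else j) :: alternatingWord j i q' :=
          alternatingWord_succ' j i q'
        by_cases hxy : x = (if Even q' then i else j)
        · exfalso
          have hτ : cs.wordProd (alternatingWord j i q') = cs.wordProd (x :: ω') := by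
            rw [cs.wordProd_cons, hω', hhead, cs.wordProd_cons, hxy,
              ← mul_assoc, cs.simple_mul_simple_self, one_mul]
          have := hmin _ (fun y hy => (mem_alternatingWord_aux hy).symm) hτ
          rw [length_alternatingWord] at this
          simp [hq] at this
        · right
          have hxval : x = (if Even q' then j else i) := by
            rcases hx with rfl | rfl <;> by_cases hE : Even q' <;> simp [hE] at hxy ⊢ <;> tauto
          have hlen : (x :: ω').length = (q' + 1) + 1 := by simp [hq]
          rw [hlen, alternatingWord_succ', hω']
          congr 1
          rw [hxval]
          by_cases hE : Even q' <;> simp [Nat.even_add_one, hE]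

end Combinatorics

noncomputable def cheb (c : ℝ) : ℕ → ℝ
  | 0 => 0
  | 1 => 1
  | n + 2 => c * cheb c (n + 1) - cheb c n

lemma cheb_zero (c : ℝ) : cheb c 0 = 0 := rfl
lemma cheb_one (c : ℝ) : cheb c 1 = 1 := rfl
lemma cheb_add_two (c : ℝ) (n : ℕ) : cheb c (n + 2) = c * cheb c (n + 1) - cheb c n := rfl

lemma cheb_sin (θ : ℝ) : ∀ t : ℕ, cheb (2 * Real.cos θ) t * Real.sin θ = Real.sin (t * θ)
  | 0 => by simp [cheb_zero]
  | 1 => by simp [cheb_one]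
  | (n + 2) => by
    have h1 := cheb_sin θ (n + 1)
    have h2 := cheb_sin θ n
    have key : Real.sin (((n : ℝ) + 2) * θ)
        = 2 * Real.cos θ * Real.sin (((n : ℝ) + 1) * θ) - Real.sin ((n : ℝ) * θ) := by
      have e1 : ((n : ℝ) + 2) * θ = ((n : ℝ) + 1) * θ + θ := by ring
      have e2 : ((n : ℝ)) * θ = ((n : ℝ) + 1) * θ - θ := by ring
      rw [e1, e2, Real.sin_add, Real.sin_sub]; ring
    push_cast
    push_cast at h1 h2
    rw [cheb_add_two, key, ← h1, ← h2]
    ring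

lemma cheb_nonneg_cos {m : ℕ} (hm : 2 ≤ m) {t : ℕ} (ht : t ≤ m) :
    0 ≤ cheb (2 * Real.cos (Real.pi / m)) t := by
  have hm0 : (0 : ℝ) < m := by positivity
  have hθpos : 0 < Real.pi / m := div_pos Real.pi_pos hm0
  have hθlt : Real.pi / m < Real.pi := by
    rw [div_lt_iff₀ hm0]
    nlinarith [Real.pi_pos, show (2 : ℝ) ≤ m from by exact_mod_cast hm]
  have hsin : 0 < Real.sin (Real.pi / m) := Real.sin_pos_of_pos_of_lt_pi hθpos hθlt
  have h := cheb_sin (Real.pi / m) t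
  have hnn : 0 ≤ Real.sin (t * (Real.pi / m)) := by
    apply Real.sin_nonneg_of_nonneg_of_le_pi
    · positivity
    · have hcast : (t : ℝ) ≤ m := Nat.cast_le.mpr ht
      calc (t : ℝ) * (Real.pi / m) ≤ m * (Real.pi / m) :=
            mul_le_mul_of_nonneg_right hcast (le_of_lt hθpos)
        _ = Real.pi := by field_simp
  nlinarith [hsin, hnn, h]

lemma cheb_nonneg_two {c : ℝ} (hc : 2 ≤ c) : ∀ t, 0 ≤ cheb c t ∧ cheb c t ≤ cheb c (t + 1)
  | 0 => by simp [cheb_zero, cheb_one]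
  | (t + 1) => by
    obtain ⟨ha, hb⟩ := cheb_nonneg_two hc t
    constructor
    · linarith
    · rw [cheb_add_two]
      nlinarith

namespace GeomRep

open CoxeterSystem

variable {B : Type*} {W : Type*} [Group W] {M : CoxeterMatrix B}
  {cs : CoxeterSystem M W} {V : Type*} [AddCommGroup V] [Module ℝ V]
  (G : GeomRep M cs V)

/-- `-2 B(αᵢ, αⱼ)`. -/
noncomputable def cc (i j : B) : ℝ := -(2 * G.form (G.root i) (G.root j))

lemma rho_simple_root_other (i j : B) :
    G.ρ (cs.simple j) (G.root i) = G.root i + (G.cc i j) • G.root j := by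
  rw [G.simple_act, G.form_symm (G.root j) (G.root i), cc]
  module

lemma rho_alt_root (i j : B) (q : ℕ) :
    G.ρ (cs.wordProd (alternatingWord i j q)) (G.root i) =
      (if Even q then cheb (G.cc i j) (q + 1) else cheb (G.cc i j) q) • G.root i
      + (if Even q then cheb (G.cc i j) q else cheb (G.cc i j) (q + 1)) • G.root j := by
  induction q with
  | zero =>
    rw [show alternatingWord i j 0 = [] from rfl, cs.wordProd_nil, G.rho_one]
    simp [cheb_zero, cheb_one]
  | succ q ih =>
    rw [alternatingWord_succ', cs.wordProd_cons, G.rho_mul, ih]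
    by_cases hE : Even q
    · simp only [hE, if_true, Nat.even_add_one, not_true_eq_false, if_false, if_pos]
      rw [map_add, map_smul, map_smul, G.rho_simple_root_other i j, G.simple_act_self,
        cheb_add_two]
      module
    · simp only [hE, if_false, Nat.even_add_one, not_false_eq_true, if_true, if_neg]
      rw [map_add, map_smul, map_smul, G.rho_simple_root_other j i, G.simple_act_self,
        cheb_add_two]
      have hcc : G.cc j i = G.cc i j := by rw [cc, cc, G.form_symm]
      rw [hcc]
      module

lemma cheb_cc_nonneg {i j : B} (hij : i ≠ j) {t : ℕ} (ht : M i j ≠ 0 → t ≤ M i j) :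
    0 ≤ cheb (G.cc i j) t := by
  by_cases hm : M i j = 0
  · have h := G.form_root_infinite i j hm
    have : (2 : ℝ) ≤ G.cc i j := by rw [cc]; linarith
    exact (cheb_nonneg_two this t).1
  · have hm2 : 2 ≤ M i j := by
      have := M.off_diagonal i j hij
      omega
    have h := G.form_root_finite i j hm
    have : G.cc i j = 2 * Real.cos (Real.pi / (M i j : ℝ)) := by rw [cc, h]; ring
    rw [this]
    exact cheb_nonneg_cos hm2 (ht hm)

lemma rank2 {i j : B} (hij : i ≠ j) (ω : List B) (hmem : ∀ x ∈ ω, x = i ∨ x = j)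
    (h1 : ∀ τ : List B, (∀ x ∈ τ, x = i ∨ x = j) → cs.wordProd τ = cs.wordProd ω →
      ω.length ≤ τ.length)
    (h2 : ∀ τ : List B, (∀ x ∈ τ, x = i ∨ x = j) →
      cs.wordProd τ = cs.wordProd ω * cs.simple i → ω.length + 1 ≤ τ.length) :
    ∃ a b : ℝ, 0 ≤ a ∧ 0 ≤ b ∧
      G.ρ (cs.wordProd ω) (G.root i) = a • G.root i + b • G.root j := by
  rcases Nat.eq_zero_or_pos ω.length with h0 | hpos
  · rw [List.length_eq_zero_iff.mp h0]
    exact ⟨1, 0, zero_le_one, le_rfl, by simp [G.rho_one]⟩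
  obtain ⟨q', hq⟩ : ∃ q', ω.length = q' + 1 := ⟨ω.length - 1, by omega⟩
  rcases eq_alt_of_min cs hij ω hmem h1 with hω | hω
  swap
  · -- ω = alternatingWord j i (q' + 1) : contradiction with h2
    exfalso
    rw [hq] at hω
    have hconcat : alternatingWord j i (q' + 1) = (alternatingWord i j q').concat i :=
      alternatingWord_succ j i q'
    have hτ : cs.wordProd (alternatingWord i j q') = cs.wordProd ω * cs.simple i := by
      rw [hω, hconcat, cs.wordProd_concat, cs.simple_mul_simple_cancel_right]
    have := h2 _ (fun y hy => mem_alternatingWord_aux hy) hτ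
    rw [length_alternatingWord] at this
    omega
  · -- ω = alternatingWord i j ω.length
    have hbound : M i j ≠ 0 → ω.length + 1 ≤ M i j := by
      intro hm0
      by_contra hb
      push_neg at hb
      have hm2 : 2 ≤ M i j := by have := M.off_diagonal i j hij; omega
      have hmq : M i j ≤ ω.length := by omega
      rcases lt_or_ge ω.length (2 * M i j) with hlt | hge
      · rcases eq_or_lt_of_le hmq with heq | hgt
        · -- ω.length = M i j : contradiction with h2
          have hsub : cs.wordProd (alternatingWord i j ω.length)
              = cs.wordProd (alternatingWord j i (M i j)) := by
            have harg : M i j * 2 - ω.length = M i j := by omega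
            rw [cs.prod_alternatingWord_eq_prod_alternatingWord_sub i j ω.length (by omega), harg]
          have hconcat : alternatingWord j i (M i j)
              = (alternatingWord i j (M i j - 1)).concat i := by
            conv_lhs => rw [show M i j = (M i j - 1) + 1 by omega]
            rw [alternatingWord_succ j i]
          have hτ : cs.wordProd (alternatingWord i j (M i j - 1))
              = cs.wordProd ω * cs.simple i := by
            rw [hω, hsub, hconcat, cs.wordProd_concat, cs.simple_mul_simple_cancel_right]
          have := h2 _ (fun y hy => mem_alternatingWord_aux hy) hτ
          rw [length_alternatingWord] at this
          omega
        · -- M i j < ω.length < 2 * M i j : shorter word, contradiction with h1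
          have hsub := cs.prod_alternatingWord_eq_prod_alternatingWord_sub i j ω.length (by omega)
          have hτ : cs.wordProd (alternatingWord j i (M i j * 2 - ω.length)) = cs.wordProd ω := by
            conv_rhs => rw [hω]
            exact hsub.symm
          have := h1 _ (fun y hy => (mem_alternatingWord_aux hy).symm) hτ
          rw [length_alternatingWord] at this
          omega
      · -- 2 * M i j ≤ ω.length : use periodicity
        have hEven : (Even (ω.length - 2 * M i j)) ↔ Even ω.length := by
          rw [Nat.even_sub hge]
          simp
        have hdiv : ω.length / 2 = (ω.length - 2 * M i j) / 2 + M i j := by omega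
        have hper : cs.wordProd (alternatingWord i j ω.length)
            = cs.wordProd (alternatingWord i j (ω.length - 2 * M i j)) := by
          rw [cs.prod_alternatingWord_eq_mul_pow, cs.prod_alternatingWord_eq_mul_pow]
          rw [hdiv, pow_add, cs.simple_mul_simple_pow, mul_one]
          congr 1
          by_cases hE : Even ω.length
          · simp [hE, hEven.mpr hE]
          · simp [hE, (by rw [hEven]; exact hE : ¬ Even (ω.length - 2 * M i j))]
        have hτ : cs.wordProd (alternatingWord i j (ω.length - 2 * M i j)) = cs.wordProd ω := by
          conv_rhs => rw [hω]
          exact hper.symm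
        have := h1 _ (fun y hy => mem_alternatingWord_aux hy) hτ
        rw [length_alternatingWord] at this
        omega
    refine ⟨if Even ω.length then cheb (G.cc i j) (ω.length + 1) else cheb (G.cc i j) ω.length,
            if Even ω.length then cheb (G.cc i j) ω.length else cheb (G.cc i j) (ω.length + 1),
            ?_, ?_, ?_⟩
    · split <;> exact G.cheb_cc_nonneg hij (fun hm => by have := hbound hm; omega)
    · split <;> exact G.cheb_cc_nonneg hij (fun hm => by have := hbound hm; omega)
    · conv_lhs => rw [hω]
      exact G.rho_alt_root i j ω.length

end GeomRep

namespace GeomRep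

variable {B : Type*} {W : Type*} [Group W] {M : CoxeterMatrix B}
  {cs : CoxeterSystem M W} {V : Type*} [AddCommGroup V] [Module ℝ V]
  (G : GeomRep M cs V)

theorem posRoot_of_not_rightDescent : ∀ (n : ℕ) (w : W) (i : B), cs.length w = n →
    cs.length w < cs.length (w * cs.simple i) → G.IsNonnegComb (G.ρ w (G.root i)) := by
  intro n
  induction n using Nat.strong_induction_on with
  | _ n IH =>
    intro w i hn hlt
    rcases eq_or_ne w 1 with rfl | hw
    · rw [G.rho_one]; exact G.isNonnegComb_root i
    obtain ⟨j, hj⟩ := cs.exists_rightDescent_of_ne_one hw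
    have hj' : cs.length (w * cs.simple j) < cs.length w := hj
    have hij : i ≠ j := by rintro rfl; omega
    classical
    have hP : ∃ k, ∃ (u : W) (ω : List B), (∀ x ∈ ω, x = i ∨ x = j) ∧
        w = u * cs.wordProd ω ∧ cs.length u + ω.length = n ∧ cs.length u = k :=
      ⟨n, w, [], by simp, by simp, by simpa using hn, hn⟩
    obtain ⟨u, ω, hmem, hw_eq, hsum, hk⟩ := Nat.find_spec hP
    have hlow : ∀ (u' : W) (ω' : List B), w = u' * cs.wordProd ω' →
        n ≤ cs.length u' + ω'.length := by
      intro u' ω' he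
      calc n = cs.length w := hn.symm
        _ ≤ cs.length u' + cs.length (cs.wordProd ω') := by
            rw [he]; exact cs.length_mul_le u' (cs.wordProd ω')
        _ ≤ cs.length u' + ω'.length := by have := cs.length_wordProd_le ω'; omega
    have hnd : ∀ x : B, (x = i ∨ x = j) → cs.length u < cs.length (u * cs.simple x) := by
      intro x hx
      rcases cs.length_mul_simple u x with h | h
      · omega
      · exfalso
        have hnew : ∃ (u' : W) (ω' : List B), (∀ y ∈ ω', y = i ∨ y = j) ∧
            w = u' * cs.wordProd ω' ∧ cs.length u' + ω'.length = n ∧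
            cs.length u' = cs.length u - 1 := by
          refine ⟨u * cs.simple x, x :: ω, ?_, ?_, ?_, ?_⟩
          · intro y hy
            rcases List.mem_cons.mp hy with rfl | hy
            · exact hx
            · exact hmem y hy
          · rw [cs.wordProd_cons, mul_assoc, cs.simple_mul_simple_cancel_left]
            exact hw_eq
          · simp only [List.length_cons]; omega
          · omega
        exact Nat.find_min hP (show cs.length u - 1 < Nat.find hP by omega) hnew
    have hune : cs.length u < n := by
      rcases Nat.eq_zero_or_pos ω.length with h0 | hpos
      · exfalso
        rw [List.length_eq_zero_iff.mp h0] at hw_eq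
        simp only [CoxeterSystem.wordProd_nil, mul_one] at hw_eq
        subst hw_eq
        have := hnd j (Or.inr rfl)
        omega
      · omega
    have hNNi : G.IsNonnegComb (G.ρ u (G.root i)) :=
      IH (cs.length u) (by omega) u i rfl (hnd i (Or.inl rfl))
    have hNNj : G.IsNonnegComb (G.ρ u (G.root j)) :=
      IH (cs.length u) (by omega) u j rfl (hnd j (Or.inr rfl))
    have h1 : ∀ τ : List B, (∀ x ∈ τ, x = i ∨ x = j) → cs.wordProd τ = cs.wordProd ω →
        ω.length ≤ τ.length := by
      intro τ hτ hpr
      have := hlow u τ (by rw [hw_eq, hpr])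
      omega
    have h2 : ∀ τ : List B, (∀ x ∈ τ, x = i ∨ x = j) →
        cs.wordProd τ = cs.wordProd ω * cs.simple i → ω.length + 1 ≤ τ.length := by
      intro τ hτ hpr
      by_contra hcon
      push_neg at hcon
      have hws : cs.length (w * cs.simple i) ≤ cs.length u + τ.length := by
        have he : w * cs.simple i = u * cs.wordProd τ := by rw [hpr, hw_eq, mul_assoc]
        calc cs.length (w * cs.simple i) = cs.length (u * cs.wordProd τ) := by rw [he]
          _ ≤ cs.length u + cs.length (cs.wordProd τ) := cs.length_mul_le _ _
          _ ≤ cs.length u + τ.length := by have := cs.length_wordProd_le τ; omega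
      omega
    obtain ⟨a, b, ha, hb, hab⟩ := G.rank2 hij ω hmem h1 h2
    have hkey : G.ρ w (G.root i) = a • G.ρ u (G.root i) + b • G.ρ u (G.root j) := by
      rw [hw_eq, G.rho_mul, hab, map_add, map_smul, map_smul]
    rw [hkey]
    exact IsNonnegComb.add G (IsNonnegComb.smul G ha hNNi) (IsNonnegComb.smul G hb hNNj)

theorem nonneg_of_lt_right {w : W} {i : B} (h : cs.length w < cs.length (w * cs.simple i)) :
    G.IsNonnegComb (G.ρ w (G.root i)) :=
  G.posRoot_of_not_rightDescent (cs.length w) w i rfl h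

theorem neg_of_gt_right {w : W} {i : B} (h : cs.length (w * cs.simple i) < cs.length w) :
    G.IsNonnegComb (-(G.ρ w (G.root i))) := by
  have h2 : cs.length (w * cs.simple i) < cs.length (w * cs.simple i * cs.simple i) := by
    rw [cs.simple_mul_simple_cancel_right]; exact h
  have := G.nonneg_of_lt_right h2
  rw [G.rho_mul, G.simple_act_self, map_neg] at this
  exact this

theorem pos_or_neg (w : W) (i : B) :
    G.IsNonnegComb (G.ρ w (G.root i)) ∨ G.IsNonnegComb (-(G.ρ w (G.root i))) := by
  rcases cs.length_mul_simple w i with h | h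
  · exact Or.inl (G.nonneg_of_lt_right (by omega))
  · exact Or.inr (G.neg_of_gt_right (by omega))

lemma form_rho_root_self (w : W) (i : B) :
    G.form (G.ρ w (G.root i)) (G.ρ w (G.root i)) = 1 := by
  rw [G.form_preserved, G.form_root_self]

lemma isNonnegComb_simple_image {i : B} {β : V}
    (hroot : ∃ (v : W) (k : B), β = G.ρ v (G.root k))
    (hβ : G.IsNonnegComb β) (hne : β ≠ G.root i) :
    G.IsNonnegComb (G.ρ (cs.simple i) β) := by
  obtain ⟨v, k, hβeq⟩ := hroot
  rcases G.pos_or_neg (cs.simple i * v) k with h | h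
  · rwa [G.rho_mul, ← hβeq] at h
  · exfalso
    rw [G.rho_mul, ← hβeq] at h
    obtain ⟨c, hc, hcs⟩ := hβ
    obtain ⟨d, hd, hds⟩ := h
    have hact : G.ρ (cs.simple i) β = β - (2 * G.form (G.root i) β) • G.root i :=
      G.simple_act i β
    have key : ((c + d).sum fun l a => a • G.root l)
        = (Finsupp.single i (2 * G.form (G.root i) β)).sum fun l a => a • G.root l := by
      rw [Finsupp.sum_add_index' (by simp) (fun a b₁ b₂ => add_smul b₁ b₂ _), ← hcs, ← hds,
        Finsupp.sum_single_index (by simp), hact]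
      module
    have hcd := G.coeff_eq_of_sum_eq key
    have hck : ∀ l, l ≠ i → c l = 0 := by
      intro l hl
      have hceq := congrArg (fun f : B →₀ ℝ => f l) hcd
      simp only [Finsupp.add_apply, Finsupp.single_apply] at hceq
      rw [if_neg (fun hli => hl (hli.symm))] at hceq
      have := hc l
      have := hd l
      linarith
    have hβsingle : β = c i • G.root i := by
      have hcsingle : c = Finsupp.single i (c i) := by
        ext l
        by_cases hl : l = i
        · subst hl; simp
        · rw [hck l hl, Finsupp.single_apply, if_neg (fun h : i = l => hl h.symm)]
      rw [hcs, hcsingle, Finsupp.sum_single_index (by simp)]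
      simp
    have hnorm : G.form β β = 1 := by rw [hβeq]; exact G.form_rho_root_self v k
    rw [hβsingle] at hnorm
    simp only [map_smul, LinearMap.smul_apply, smul_eq_mul, G.form_root_self, mul_one] at hnorm
    have hci : c i = 1 := by nlinarith [hc i]
    exact hne (by rw [hβsingle, hci, one_smul])

lemma finite_inversions : ∀ (n : ℕ) (w : W), cs.length w = n →
    {β : V | (∃ (v : W) (k : B), β = G.ρ v (G.root k)) ∧ G.IsNonnegComb β ∧
      G.IsNonnegComb (-(G.ρ w⁻¹ β))}.Finite := by
  intro n
  induction n using Nat.strong_induction_on with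
  | _ n IH =>
    intro w hn
    rcases eq_or_ne w 1 with rfl | hw
    · convert Set.finite_empty
      ext β
      simp only [Set.mem_setOf_eq, Set.mem_empty_iff_false, iff_false, not_and]
      rintro ⟨v, k, rfl⟩ h1 h2
      rw [inv_one, G.rho_one] at h2
      have h0 := G.eq_zero_of_isNonnegComb_of_neg h1 h2
      have hnorm := G.form_rho_root_self v k
      rw [h0] at hnorm
      simp at hnorm
    · obtain ⟨i, hi⟩ := cs.exists_leftDescent_of_ne_one hw
      have hi' : cs.length (cs.simple i * w) < cs.length w := hi
      have hfin := IH (cs.length (cs.simple i * w)) (by omega) (cs.simple i * w) rfl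
      apply Set.Finite.subset (Set.Finite.insert (G.root i) (hfin.image (G.ρ (cs.simple i))))
      rintro β ⟨hroot, hpos, hneg⟩
      by_cases hβ : β = G.root i
      · exact Set.mem_insert_iff.mpr (Or.inl hβ)
      · refine Set.mem_insert_iff.mpr (Or.inr ⟨G.ρ (cs.simple i) β, ⟨?_, ?_, ?_⟩, ?_⟩)
        · obtain ⟨v, k, rfl⟩ := hroot
          exact ⟨cs.simple i * v, k, (G.rho_mul _ _ _).symm⟩
        · exact G.isNonnegComb_simple_image hroot hpos hβ
        · have hrw : G.ρ (cs.simple i * w)⁻¹ (G.ρ (cs.simple i) β) = G.ρ w⁻¹ β := by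
            rw [← G.rho_mul]
            congr 2
            rw [mul_inv_rev, cs.inv_simple, mul_assoc, cs.simple_mul_simple_self, mul_one]
          rw [hrw]
          exact hneg
        · show G.ρ (cs.simple i) (G.ρ (cs.simple i) β) = β
          rw [← G.rho_mul, cs.simple_mul_simple_self, G.rho_one]

lemma finite_neg_simples (w : W) :
    {k : B | ¬ G.IsNonnegComb (G.ρ w⁻¹ (G.root k))}.Finite := by
  have hfin := G.finite_inversions (cs.length w) w rfl
  have hsub : G.root '' {k | ¬ G.IsNonnegComb (G.ρ w⁻¹ (G.root k))} ⊆
      {β : V | (∃ (v : W) (k : B), β = G.ρ v (G.root k)) ∧ G.IsNonnegComb β ∧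
        G.IsNonnegComb (-(G.ρ w⁻¹ β))} := by
    rintro β ⟨k, hk, rfl⟩
    exact ⟨⟨1, k, (G.rho_one _).symm⟩, G.isNonnegComb_root k,
      (G.pos_or_neg w⁻¹ k).resolve_left hk⟩
  exact Set.Finite.of_finite_image (hfin.subset hsub)
    (fun a _ b _ hab => G.root_indep.injective hab)

end GeomRep

namespace GeomRep

variable {B : Type*} {W : Type*} [Group W] {M : CoxeterMatrix B}
  {cs : CoxeterSystem M W} {V : Type*} [AddCommGroup V] [Module ℝ V]
  (G : GeomRep M cs V)

lemma chamber_smul {t : ℝ} (ht : 0 ≤ t) {v : V} (hv : v ∈ G.chamber) : t • v ∈ G.chamber := by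
  intro k
  simp only [map_smul, LinearMap.smul_apply, smul_eq_mul]
  exact mul_nonneg ht (hv k)

lemma chamber_comb {a b : ℝ} (ha : 0 ≤ a) (hb : 0 ≤ b) {x y : V}
    (hx : x ∈ G.chamber) (hy : y ∈ G.chamber) : a • x + b • y ∈ G.chamber := by
  intro k
  simp only [map_add, map_smul, LinearMap.add_apply, LinearMap.smul_apply, smul_eq_mul]
  exact add_nonneg (mul_nonneg ha (hx k)) (mul_nonneg hb (hy k))

lemma chamber_subset_titsCone : G.chamber ⊆ G.titsCone := by
  intro v hv
  exact Set.mem_iUnion.mpr ⟨1, v, hv, by rw [map_one]; rfl⟩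

lemma titsCone_rho (w : W) {v : V} (hv : v ∈ G.titsCone) : G.ρ w v ∈ G.titsCone := by
  obtain ⟨w', hw'⟩ := Set.mem_iUnion.mp hv
  obtain ⟨d, hd, rfl⟩ := hw'
  exact Set.mem_iUnion.mpr ⟨w * w', d, hd, G.rho_mul _ _ _⟩

lemma rho_mem_titsCone (w : W) {d : V} (hd : d ∈ G.chamber) : G.ρ w d ∈ G.titsCone :=
  Set.mem_iUnion.mpr ⟨w, d, hd, rfl⟩

theorem seg_subset : ∀ (n : ℕ) (w : W), cs.length w ≤ n → ∀ x ∈ G.chamber, ∀ d ∈ G.chamber,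
    ∀ a b : ℝ, 0 ≤ a → 0 ≤ b → a + b = 1 → a • x + b • (G.ρ w d) ∈ G.titsCone := by
  intro n
  induction n with
  | zero =>
    intro w hw x hx d hd a b ha hb hab
    have hone : w = 1 := cs.length_eq_zero_iff.mp (by omega)
    subst hone
    rw [G.rho_one]
    exact G.chamber_subset_titsCone (G.chamber_comb ha hb hx hd)
  | succ n IHn =>
    intro w hw x hx d hd a b ha hb hab
    classical
    by_cases hD : ∀ k : B, 0 ≤ G.form (G.ρ w d) (G.root k)
    · exact G.chamber_subset_titsCone (G.chamber_comb ha hb hx hD)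
    push_neg at hD
    set y := G.ρ w d with hy
    have hDfinite : {k : B | G.form y (G.root k) < 0}.Finite := by
      apply Set.Finite.subset (G.finite_neg_simples w)
      intro k hk
      simp only [Set.mem_setOf_eq] at hk ⊢
      intro hNN
      have hge := G.form_nonneg_of_chamber hd hNN
      rw [← G.form_rho_left] at hge
      rw [← hy] at hge
      linarith
    obtain ⟨k₀, hk₀⟩ := hD
    have hne : hDfinite.toFinset.Nonempty :=
      ⟨k₀, by rw [Set.Finite.mem_toFinset]; exact hk₀⟩
    set tf : B → ℝ := fun k => G.form x (G.root k) / (G.form x (G.root k) - G.form y (G.root k))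
      with htfdef
    obtain ⟨i₀, hi₀mem, hi₀min⟩ := hDfinite.toFinset.exists_min_image tf hne
    have hi₀neg : G.form y (G.root i₀) < 0 := by
      simpa [Set.Finite.mem_toFinset] using hi₀mem
    have htf : ∀ k : B, G.form y (G.root k) < 0 →
        0 ≤ tf k ∧ tf k < 1 ∧ tf k * (G.form x (G.root k) - G.form y (G.root k))
          = G.form x (G.root k) := by
      intro k hk
      have hx' := hx k
      have hden : 0 < G.form x (G.root k) - G.form y (G.root k) := by linarith
      refine ⟨div_nonneg hx' (le_of_lt hden), ?_, div_mul_cancel₀ _ (ne_of_gt hden)⟩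
      rw [div_lt_one hden]
      linarith
    set t0 := tf i₀ with ht0def
    obtain ⟨ht00, ht01, ht0eq⟩ := htf i₀ hi₀neg
    have hval : ∀ (t : ℝ) (k : B), G.form ((1 - t) • x + t • y) (G.root k)
        = G.form x (G.root k) - t * (G.form x (G.root k) - G.form y (G.root k)) := by
      intro t k
      simp only [map_add, map_smul, LinearMap.add_apply, LinearMap.smul_apply, smul_eq_mul]
      ring
    have hchamber_point : ∀ t : ℝ, 0 ≤ t → t ≤ t0 → ((1 - t) • x + t • y) ∈ G.chamber := by
      intro t ht ht' k
      rw [hval]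
      by_cases hk : G.form y (G.root k) < 0
      · obtain ⟨h1, h2, h3⟩ := htf k hk
        have hden : 0 < G.form x (G.root k) - G.form y (G.root k) := by
          have := hx k; linarith
        have htk : t ≤ tf k := le_trans ht' (hi₀min k (by
          rw [Set.Finite.mem_toFinset]; exact hk))
        nlinarith [mul_le_mul_of_nonneg_right htk (le_of_lt hden)]
      · push_neg at hk
        have hx' := hx k
        nlinarith
    have hz := hchamber_point t0 ht00 le_rfl
    set z := (1 - t0) • x + t0 • y with hzdef
    have hz0 : G.form z (G.root i₀) = 0 := by
      rw [hzdef, hval]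
      linarith [ht0eq]
    have hfix : G.ρ (cs.simple i₀) z = z := by
      rw [G.simple_act]
      have hs : G.form (G.root i₀) z = 0 := by rw [G.form_symm]; exact hz0
      rw [hs, mul_zero, zero_smul, sub_zero]
    have hdesc : cs.length (cs.simple i₀ * w) < cs.length w := by
      have hnn : ¬ G.IsNonnegComb (G.ρ w⁻¹ (G.root i₀)) := by
        intro hNN
        have hge := G.form_nonneg_of_chamber hd hNN
        rw [← G.form_rho_left, ← hy] at hge
        linarith
      have h1 : ¬ (cs.length w⁻¹ < cs.length (w⁻¹ * cs.simple i₀)) :=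
        fun hlt => hnn (G.nonneg_of_lt_right hlt)
      have hinv1 : cs.length (cs.simple i₀ * w) = cs.length (w⁻¹ * cs.simple i₀) := by
        rw [← cs.length_inv (cs.simple i₀ * w), mul_inv_rev, cs.inv_simple]
      have hinv2 : cs.length w⁻¹ = cs.length w := cs.length_inv w
      rcases cs.length_mul_simple w⁻¹ i₀ with h | h
      · omega
      · omega
    rcases le_or_gt b t0 with hble | hbgt
    · have hmem := hchamber_point b hb hble
      rw [show a = 1 - b by linarith]
      exact G.chamber_subset_titsCone hmem
    · set r := (b - t0) / (1 - t0) with hrdef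
      have hb1 : b ≤ 1 := by linarith
      have hr0 : 0 ≤ r := div_nonneg (by linarith) (by linarith)
      have hr1 : r ≤ 1 := by
        rw [hrdef, div_le_one (by linarith)]
        linarith
      have hmul : r * (1 - t0) = b - t0 := div_mul_cancel₀ _ (by linarith)
      have hcoef1 : (1 - r) * (1 - t0) = a := by linear_combination -hmul - hab
      have hcoef2 : (1 - r) * t0 + r = b := by linear_combination hmul
      have hw' : cs.length (cs.simple i₀ * w) ≤ n := by omega
      have hq := IHn (cs.simple i₀ * w) hw' z hz d hd (1 - r) r (by linarith) hr0 (by ring)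
      have hzy : (1 - r) • z + r • y = a • x + b • y := by
        rw [hzdef, smul_add, smul_smul, smul_smul, add_assoc, ← add_smul, hcoef1, hcoef2]
      have hrho : G.ρ (cs.simple i₀) ((1 - r) • z + r • G.ρ (cs.simple i₀ * w) d)
          = (1 - r) • z + r • y := by
        rw [map_add, map_smul, map_smul, hfix, ← G.rho_mul, ← mul_assoc,
          cs.simple_mul_simple_self, one_mul, ← hy]
      rw [← hzy, ← hrho]
      exact G.titsCone_rho (cs.simple i₀) hq

end GeomRep

/-- The Tits cone is a convex cone. -/
theorem titsCone_convexCone {B : Type*} {W : Type*} [Group W] {M : CoxeterMatrix B}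
    (cs : CoxeterSystem M W) {V : Type*} [AddCommGroup V] [Module ℝ V]
    (G : GeomRep M cs V) :
    Convex ℝ G.titsCone ∧ ∀ c : ℝ, 0 ≤ c → ∀ v ∈ G.titsCone, c • v ∈ G.titsCone := by
  constructor
  · intro p hp q hq a b ha hb hab
    obtain ⟨w₁, hp'⟩ := Set.mem_iUnion.mp hp
    obtain ⟨x, hx, rfl⟩ := hp'
    obtain ⟨w₂, hq'⟩ := Set.mem_iUnion.mp hq
    obtain ⟨d, hd, rfl⟩ := hq'
    have h := G.seg_subset (cs.length (w₁⁻¹ * w₂)) (w₁⁻¹ * w₂) le_rfl x hx d hd a b ha hb hab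
    have h2 := G.titsCone_rho w₁ h
    rw [map_add, map_smul, map_smul, ← G.rho_mul, mul_inv_cancel_left] at h2
    exact h2
  · intro c hc v hv
    obtain ⟨w, hv'⟩ := Set.mem_iUnion.mp hv
    obtain ⟨d, hd, rfl⟩ := hv'
    rw [← map_smul]
    exact G.rho_mem_titsCone w (G.chamber_smul hc hd)
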